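/- Let θ ∈ (0,1) and y* = (1−θ, θ)ᵀ. Let g : ℝ²_{>0} → ℝ²_{>0} be twice continuously differentiable with g(c·y*) = c·y* for all c > 0 and g₁(y) + g₂(y) = y₁ + y₂ for all y ∈ ℝ²_{>0}. Then the Jacobian Dg(y*) satisfies Dg(y*)·y* = y* and Dg(y*)·(1,−1)ᵀ = R·(1,−1)ᵀ, where R = tr(Dg(y*)) − 1; in particular the spectrum of Dg(y*) is {1, R} with R real. -/

import Mathlib

/-- For θ ∈ (0,1), y* = (1−θ, θ)ᵀ and a C² map `g` on the positive
quadrant fixing every positive multiple of y* and conserving the sum of components,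
the Jacobian `J = Dg(y*)` satisfies `J y* = y*`, `J (1,−1)ᵀ = R (1,−1)ᵀ` with
`R = tr J − 1`, and the spectrum of `J` is `{1, R}`. -/
theorem jacobian_spectrum_of_conservative_fixed_ray
    (θ : ℝ) (hθ : θ ∈ Set.Ioo (0 : ℝ) 1)
    (g : (Fin 2 → ℝ) → (Fin 2 → ℝ))
    (hmap : ∀ y : Fin 2 → ℝ, 0 < y 0 → 0 < y 1 → 0 < g y 0 ∧ 0 < g y 1)
    (hsmooth : ContDiffOn ℝ 2 g {y : Fin 2 → ℝ | 0 < y 0 ∧ 0 < y 1})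
    (hfix : ∀ c : ℝ, 0 < c → g (c • ![1 - θ, θ]) = c • ![1 - θ, θ])
    (hcons : ∀ y : Fin 2 → ℝ, 0 < y 0 → 0 < y 1 → g y 0 + g y 1 = y 0 + y 1)
    (J : Matrix (Fin 2) (Fin 2) ℝ)
    (hJ : J = Matrix.of fun i j => fderiv ℝ g ![1 - θ, θ] (Pi.single j 1) i) :
    J.mulVec ![1 - θ, θ] = ![1 - θ, θ] ∧
    J.mulVec ![1, -1] = (J.trace - 1) • ![1, -1] ∧
    spectrum ℝ J = {1, J.trace - 1} := by
  obtain ⟨hθ0, hθ1⟩ := hθ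
  set s : Set (Fin 2 → ℝ) := {y : Fin 2 → ℝ | 0 < y 0 ∧ 0 < y 1} with hs
  have hopen : IsOpen s := by
    have : s = ((fun y : Fin 2 → ℝ => y 0) ⁻¹' Set.Ioi 0) ∩
        ((fun y : Fin 2 → ℝ => y 1) ⁻¹' Set.Ioi 0) := rfl
    rw [this]
    exact (isOpen_Ioi.preimage (continuous_apply 0)).inter
      (isOpen_Ioi.preimage (continuous_apply 1))
  have hy : (![1 - θ, θ] : Fin 2 → ℝ) ∈ s := by
    constructor
    · show (0:ℝ) < ![1 - θ, θ] 0
      simp; linarith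
    · show (0:ℝ) < ![1 - θ, θ] 1
      simpa using hθ0
  have hmem : s ∈ nhds (![1 - θ, θ] : Fin 2 → ℝ) := hopen.mem_nhds hy
  have hdiff : DifferentiableAt ℝ g ![1 - θ, θ] :=
    ((hsmooth.contDiffAt hmem).differentiableAt (by norm_num))
  set f := fderiv ℝ g ![1 - θ, θ] with hf
  have hg : HasFDerivAt g f ![1 - θ, θ] := hdiff.hasFDerivAt
  -- column sums
  set F : (Fin 2 → ℝ) →L[ℝ] ℝ :=
    (ContinuousLinearMap.proj 0 : (Fin 2 → ℝ) →L[ℝ] ℝ) +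
      (ContinuousLinearMap.proj 1 : (Fin 2 → ℝ) →L[ℝ] ℝ) with hF
  have hFapp : ∀ v : Fin 2 → ℝ, F v = v 0 + v 1 := fun v => rfl
  have hcomp : HasFDerivAt (F ∘ g) (F.comp f) ![1 - θ, θ] := F.hasFDerivAt.comp _ hg
  have heq : (F ∘ g) =ᶠ[nhds (![1 - θ, θ] : Fin 2 → ℝ)] (F : (Fin 2 → ℝ) → ℝ) :=
    Filter.eventuallyEq_of_mem hmem (fun y hy' => by
      simp only [Function.comp_apply, hFapp]
      exact hcons y hy'.1 hy'.2)
  have hunique : F.comp f = F :=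
    (hcomp.congr_of_eventuallyEq heq.symm).unique F.hasFDerivAt
  have hcol : ∀ v : Fin 2 → ℝ, f v 0 + f v 1 = v 0 + v 1 := by
    intro v
    have := congrArg (fun L : (Fin 2 → ℝ) →L[ℝ] ℝ => L v) hunique
    simpa [hFapp] using this
  -- ray
  have hray : f ![1 - θ, θ] = ![1 - θ, θ] := by
    have hψ : HasDerivAt (fun c : ℝ => c • (![1 - θ, θ] : Fin 2 → ℝ))
        ((1:ℝ) • ![1 - θ, θ]) 1 := (hasDerivAt_id (1:ℝ)).smul_const _
    have hψ' : HasDerivAt (fun c : ℝ => c • (![1 - θ, θ] : Fin 2 → ℝ))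
        (![1 - θ, θ]) 1 := by simpa using hψ
    have hg' : HasFDerivAt g f ((1:ℝ) • ![1 - θ, θ]) := by simpa using hg
    have hcomp' : HasDerivAt (fun c : ℝ => g (c • ![1 - θ, θ])) (f ![1 - θ, θ]) 1 := by
      have := hg'.comp_hasDerivAt 1 hψ'
      simpa [Function.comp_def] using this
    have heq' : (fun c : ℝ => g (c • ![1 - θ, θ]))
        =ᶠ[nhds (1:ℝ)] fun c : ℝ => c • (![1 - θ, θ] : Fin 2 → ℝ) :=
      Filter.eventuallyEq_of_mem (Ioi_mem_nhds one_pos) (fun c hc => hfix c hc)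
    have h2 : HasDerivAt (fun c : ℝ => c • (![1 - θ, θ] : Fin 2 → ℝ))
        (f ![1 - θ, θ]) 1 := hcomp'.congr_of_eventuallyEq heq'.symm
    have := h2.unique hψ'
    simpa using this
  -- entries
  have hJentry : ∀ i j, J i j = f (Pi.single j 1) i := by
    intro i j; rw [hJ]; rfl
  have ha : f (Pi.single (0:Fin 2) (1:ℝ)) 0 + f (Pi.single (0:Fin 2) (1:ℝ)) 1 = 1 := by
    have := hcol (Pi.single (0:Fin 2) (1:ℝ)); simpa using this
  have hb : f (Pi.single (1:Fin 2) (1:ℝ)) 0 + f (Pi.single (1:Fin 2) (1:ℝ)) 1 = 1 := by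
    have := hcol (Pi.single (1:Fin 2) (1:ℝ)); simpa using this
  have htr : J.trace = f (Pi.single (0:Fin 2) (1:ℝ)) 0 + f (Pi.single (1:Fin 2) (1:ℝ)) 1 := by
    rw [Matrix.trace_fin_two, hJentry, hJentry]
  -- mulVec = f
  have hJf : ∀ u : Fin 2 → ℝ, J.mulVec u = f u := by
    intro u
    have hu : u = u 0 • (Pi.single 0 1 : Fin 2 → ℝ) + u 1 • (Pi.single 1 1 : Fin 2 → ℝ) := by
      funext j; fin_cases j <;> simp
    funext i
    rw [Matrix.mulVec, dotProduct]
    rw [Fin.sum_univ_two, hJentry, hJentry]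
    conv_rhs => rw [hu]
    simp only [map_add, map_smul, Pi.add_apply, Pi.smul_apply, smul_eq_mul]
    ring
  refine ⟨by rw [hJf]; exact hray, ?_, ?_⟩
  · -- second claim
    funext i
    rw [hJf]
    have hsplit : (![1, -1] : Fin 2 → ℝ)
        = Pi.single (0:Fin 2) (1:ℝ) - Pi.single (1:Fin 2) (1:ℝ) := by
      funext j; fin_cases j <;> simp
    rw [hsplit, map_sub]
    fin_cases i <;>
      simp [Pi.sub_apply, Pi.smul_apply, smul_eq_mul, htr, Pi.single_apply] <;>
        linarith [ha, hb]
  · -- spectrum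
    have hdet : ∀ μ : ℝ, (algebraMap ℝ (Matrix (Fin 2) (Fin 2) ℝ) μ - J).det
        = (μ - 1) * (μ - (J.trace - 1)) := by
      intro μ
      rw [Matrix.det_fin_two]
      simp only [Matrix.sub_apply, Matrix.algebraMap_matrix_apply, if_pos rfl,
        hJentry, htr]
      norm_num
      have hb0 : f (Pi.single (1:Fin 2) (1:ℝ)) 0 = 1 - f (Pi.single (1:Fin 2) (1:ℝ)) 1 := by
        linarith [hb]
      have hc0 : f (Pi.single (0:Fin 2) (1:ℝ)) 1 = 1 - f (Pi.single (0:Fin 2) (1:ℝ)) 0 := by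
        linarith [ha]
      rw [hb0, hc0]; ring
    ext μ
    simp only [spectrum.mem_iff, ← Matrix.isUnit_iff_isUnit_det, Set.mem_insert_iff,
      Set.mem_singleton_iff]
    rw [Matrix.isUnit_iff_isUnit_det, hdet, isUnit_iff_ne_zero, not_not, mul_eq_zero,
      sub_eq_zero, sub_eq_zero]
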